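/- For every r ≥ 1, the map c_3 : F_q → F_2^{q} sending a to (tr(a·(b+γ_0)^{-1}), ..., tr(a·(b+γ_{q/2−1})^{-1}), tr(a·(b+γ_0)^{-1}), ..., tr(a·(b+γ_{q/2−1})^{-1})) is an injective F_2-linear (additive) map, and its image is exactly the dual code C_3^⊥ = {w ∈ F_2^{q} : Σ_l w_l·u_l = 0 in F_2 for all u ∈ C_3}. In particular C_3^⊥ has exactly q elements. -/

import Mathlib

open Finset Polynomial

/-- The trace map `tr : F_q → F_2 ⊆ F_q`, `tr x = x + x² + ⋯ + x^(2^(r-1))`. -/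
def trF {F : Type*} [Field F] (r : ℕ) (x : F) : F :=
  ∑ i ∈ Finset.range r, x ^ (2 ^ i)

section aux
variable {F : Type*} [Field F]

lemma charF_two [Fintype F] {r : ℕ} (hr : 1 ≤ r) (hF : Fintype.card F = 2 ^ r) : CharP F 2 := by
  obtain ⟨n, hp, hc⟩ := FiniteField.card F (ringChar F)
  have h2 : ringChar F = 2 := by
    have hdvd : ringChar F ∣ 2 ^ r := by
      rw [← hF, hc]; exact dvd_pow_self _ (by positivity)
    have := (Nat.Prime.dvd_of_dvd_pow hp hdvd)
    exact (Nat.prime_dvd_prime_iff_eq hp Nat.prime_two).mp this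
  rw [← h2]; exact ringChar.charP F

lemma trF_add [CharP F 2] (r : ℕ) (x y : F) : trF r (x + y) = trF r x + trF r y := by
  haveI : ExpChar F 2 := ExpChar.prime Nat.prime_two
  unfold trF
  rw [← Finset.sum_add_distrib]
  exact Finset.sum_congr rfl fun i _ => add_pow_char_pow x y 2 i

def trFHom [CharP F 2] (r : ℕ) : F →+ F where
  toFun := trF r
  map_zero' := by
    unfold trF
    exact Finset.sum_eq_zero fun i _ => zero_pow (by positivity)
  map_add' := trF_add r

lemma trF_mul_self [CharP F 2] [Fintype F] {r : ℕ} (hF : Fintype.card F = 2 ^ r) (x : F) :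
    trF r x * trF r x = trF r x := by
  haveI : ExpChar F 2 := ExpChar.prime Nat.prime_two
  have h1 : trF r x * trF r x = ∑ i ∈ range r, x ^ 2 ^ (i + 1) := by
    rw [← pow_two]
    unfold trF
    rw [sum_pow_char]
    exact Finset.sum_congr rfl fun i _ => by rw [← pow_mul, pow_succ]
  have h2 : ∑ i ∈ range (r+1), x ^ 2 ^ i = (∑ i ∈ range r, x ^ 2 ^ (i+1)) + x ^ 2 ^ 0 :=
    Finset.sum_range_succ' _ r
  have h3 : ∑ i ∈ range (r+1), x ^ 2 ^ i = trF r x + x ^ 2 ^ r := Finset.sum_range_succ _ r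
  have h4 : x ^ 2 ^ r = x := by rw [← hF]; exact FiniteField.pow_card x
  have h5 : (x : F) + x = 0 := CharTwo.add_self_eq_zero x
  rw [h1]
  have := h2.symm.trans h3
  -- (∑ i ∈ range r, x ^ 2 ^ (i+1)) + x = trF r x + x
  rw [h4, pow_zero, pow_one] at this
  have := congrArg (· + x) this
  simpa [add_assoc, h5] using this

end aux

/-- The trace map with values in `F_2 = ZMod 2` (the value of `trF` is always `0` or `1`). -/
def tr2 {F : Type*} [Field F] [DecidableEq F] (r : ℕ) (x : F) : ZMod 2 :=
  if trF r x = 0 then 0 else 1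

section aux2
variable {F : Type*} [Field F] [DecidableEq F]

lemma cast_tr2 [CharP F 2] [Fintype F] {r : ℕ} (hF : Fintype.card F = 2 ^ r) (x : F) :
    (ZMod.castHom (dvd_refl 2) F) (tr2 r x) = trF r x := by
  have h := trF_mul_self hF x
  have : trF r x = 0 ∨ trF r x = 1 := by
    rcases mul_eq_zero.mp (show trF r x * (trF r x - 1) = 0 by ring_nf; linear_combination h) with
      h' | h'
    · exact Or.inl h'
    · exact Or.inr (by linear_combination h')
  unfold tr2
  rcases this with h' | h' <;> simp [h']

lemma tr2_add [CharP F 2] [Fintype F] {r : ℕ} (hF : Fintype.card F = 2 ^ r) (x y : F) :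
    tr2 r (x + y) = tr2 r x + tr2 r y := by
  apply (ZMod.castHom (dvd_refl 2) F).injective
  rw [map_add, cast_tr2 hF, cast_tr2 hF, cast_tr2 hF, trF_add]

lemma tr2_eq_zero_iff {r : ℕ} {x : F} : tr2 r x = 0 ↔ trF r x = 0 := by
  unfold tr2
  split <;> simp_all

lemma card_trF_zero_le [CharP F 2] [Fintype F] {r : ℕ} (hr : 1 ≤ r) :
    (Finset.univ.filter (fun x : F => trF r x = 0)).card ≤ 2 ^ (r - 1) := by
  set P : F[X] := ∑ i ∈ range r, X ^ (2 ^ i) with hP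
  have hcoeff : ∀ n, P.coeff n = ∑ i ∈ range r, if n = 2 ^ i then 1 else 0 := by
    intro n; rw [hP, Polynomial.finset_sum_coeff]
    exact Finset.sum_congr rfl fun i _ => Polynomial.coeff_X_pow _ _
  have hPne : P ≠ 0 := by
    intro h
    have h1 : P.coeff (2 ^ (r - 1)) = 1 := by
      rw [hcoeff]
      rw [Finset.sum_eq_single (r - 1)]
      · simp
      · intro i hi hne
        rw [if_neg]
        exact fun he => hne ((Nat.pow_right_injective le_rfl) he.symm)
      · intro h'; exact absurd (Finset.mem_range.mpr (by omega)) h'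
    rw [h] at h1; simp at h1
  have hdeg : P.natDegree ≤ 2 ^ (r - 1) := by
    rw [Polynomial.natDegree_le_iff_coeff_eq_zero]
    intro m hm
    rw [hcoeff]
    refine Finset.sum_eq_zero fun i hi => ?_
    rw [if_neg]
    have : 2 ^ i ≤ 2 ^ (r - 1) := Nat.pow_le_pow_right (by norm_num) (by
      have := Finset.mem_range.mp hi; omega)
    omega
  have hroot : ∀ x : F, trF r x = 0 → x ∈ P.roots.toFinset := by
    intro x hx
    rw [Multiset.mem_toFinset, Polynomial.mem_roots hPne]
    unfold Polynomial.IsRoot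
    rw [hP, Polynomial.eval_finset_sum]
    simpa [trF] using hx
  calc (Finset.univ.filter (fun x : F => trF r x = 0)).card
      ≤ P.roots.toFinset.card := Finset.card_le_card (fun x hx => hroot x (Finset.mem_filter.mp hx).2)
    _ ≤ Multiset.card P.roots := Multiset.toFinset_card_le _
    _ ≤ P.natDegree := Polynomial.card_roots' P
    _ ≤ 2 ^ (r - 1) := hdeg

section aux3
variable {F : Type*} [Field F] [DecidableEq F] [Fintype F]

lemma key_inj [CharP F 2] {r : ℕ} (hr : 1 ≤ r) (hF : Fintype.card F = 2 ^ r)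
    {b : F} (hb : ∀ α : F, α ^ 2 + α ≠ b)
    {γ : Fin (2 ^ (r - 1)) → F} (hγinj : Function.Injective γ)
    (hγran : Set.range γ = {β : F | ∃ α : F, β = α ^ 2 + α})
    (a : F) (ha : ∀ i, trF r (a * (b + γ i)⁻¹) = 0) : a = 0 := by
  by_contra hane
  have hbγ : ∀ i, b + γ i ≠ 0 := by
    intro i h
    have : γ i = b := by
      have hb' : b = -γ i := eq_neg_of_add_eq_zero_left h
      rw [hb', CharTwo.neg_eq]
    have hmem : γ i ∈ Set.range γ := Set.mem_range_self i
    rw [hγran, this] at hmem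
    obtain ⟨α, hα⟩ := hmem
    exact hb α hα.symm
  set f : Fin (2 ^ (r - 1)) → F := fun i => a * (b + γ i)⁻¹ with hf
  have hfinj : Function.Injective f := by
    intro i j h
    apply hγinj
    have := mul_left_cancel₀ hane h
    have := inv_injective this
    exact add_left_cancel this
  have hfne : ∀ i, f i ≠ 0 := fun i =>
    mul_ne_zero hane (inv_ne_zero (hbγ i))
  set T : Finset F := insert 0 (Finset.univ.image f) with hT
  have hTsub : T ⊆ Finset.univ.filter (fun x : F => trF r x = 0) := by
    intro x hx
    rw [hT, Finset.mem_insert] at hx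
    rcases hx with rfl | hx
    · exact Finset.mem_filter.mpr ⟨Finset.mem_univ _, map_zero (trFHom r)⟩
    · obtain ⟨i, _, rfl⟩ := Finset.mem_image.mp hx
      exact Finset.mem_filter.mpr ⟨Finset.mem_univ _, ha i⟩
  have hTcard : T.card = 2 ^ (r - 1) + 1 := by
    rw [hT, Finset.card_insert_of_notMem, Finset.card_image_of_injective _ hfinj]
    · simp
    · intro h
      obtain ⟨i, _, hi⟩ := Finset.mem_image.mp h
      exact hfne i hi
  have := Finset.card_le_card hTsub
  have := card_trF_zero_le (F := F) hr
  omega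

end aux3
end aux2

/-- The binary linear code `C = {u ∈ F_2^n : ∑_l u_l·v_l = 0 in F_q}`, where `u_l ∈ F_2`
acts on `F_q` through the inclusion `F_2 ⊆ F_q`. -/
def codeSet {F : Type*} [Field F] {n : ℕ} (v : Fin n → F) : Set (Fin n → ZMod 2) :=
  {u | ∑ l, (u l).val • v l = 0}

/-- The dual code `C^⊥ = {w ∈ F_2^n : ∑_l w_l·u_l = 0 in F_2 for all u ∈ C}`. -/
def dualSet {F : Type*} [Field F] {n : ℕ} (v : Fin n → F) : Set (Fin n → ZMod 2) :=
  {w | ∀ u ∈ codeSet v, ∑ l, w l * u l = 0}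

/-- The vector `(g_1⁻¹, …, g_m⁻¹, g_1⁻¹, …, g_m⁻¹) ∈ F_q^n`, where `n = m + m`. -/
def doubledInvVec {F : Type*} [Field F] {m n : ℕ} (g : Fin m → F) (hN : n = m + m) :
    Fin n → F :=
  fun l => (Fin.append g g (Fin.cast hN l))⁻¹

/-- The codeword map `a ↦ (tr(a·v_1), …, tr(a·v_n)) ∈ F_2^n`. -/
def cw {F : Type*} [Field F] [DecidableEq F] (r : ℕ) {n : ℕ} (v : Fin n → F) (a : F) :
    Fin n → ZMod 2 :=
  fun l => tr2 r (a * v l)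

/-- For every `r ≥ 1`, the map `c_3 : F_q → F_2^q`,
`a ↦ (tr(a·(b+γ_0)⁻¹), …, tr(a·(b+γ_{q/2−1})⁻¹), tr(a·(b+γ_0)⁻¹), …, tr(a·(b+γ_{q/2−1})⁻¹))`,
where `b ∈ F_q \ Θ(F_q)` and `γ_0 = 0, γ_1, …, γ_{q/2−1}` enumerate the elements of
`Θ(F_q) = {α² + α : α ∈ F_q}`, is an injective `F_2`-linear (additive) map whose image is
exactly the dual code `C_3^⊥`; in particular `C_3^⊥` has exactly `q` elements. -/
theorem c3_injective_additive_range_eq_dual {F : Type*} [Field F] [Fintype F] [DecidableEq F]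
    (r : ℕ) (hr : 1 ≤ r) (hF : Fintype.card F = 2 ^ r)
    (b : F) (hb : ∀ α : F, α ^ 2 + α ≠ b)
    (γ : Fin (2 ^ (r - 1)) → F) (hγinj : Function.Injective γ)
    (hγran : Set.range γ = {β : F | ∃ α : F, β = α ^ 2 + α})
    (hN : 2 ^ r = 2 ^ (r - 1) + 2 ^ (r - 1)) :
    Function.Injective (cw r (doubledInvVec (fun i => b + γ i) hN)) ∧
    (∀ a a' : F, cw r (doubledInvVec (fun i => b + γ i) hN) (a + a')
        = cw r (doubledInvVec (fun i => b + γ i) hN) a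
          + cw r (doubledInvVec (fun i => b + γ i) hN) a') ∧
    Set.range (cw r (doubledInvVec (fun i => b + γ i) hN))
        = dualSet (doubledInvVec (fun i => b + γ i) hN) ∧
    Nat.card (dualSet (doubledInvVec (fun i => b + γ i) hN)) = 2 ^ r := by
  haveI hchar : CharP F 2 := charF_two hr hF
  set v := doubledInvVec (fun i => b + γ i) hN with hv
  -- additivity
  have hadd : ∀ a a' : F, cw r v (a + a') = cw r v a + cw r v a' := by
    intro a a'; funext l
    show tr2 r ((a + a') * v l) = tr2 r (a * v l) + tr2 r (a' * v l)
    rw [add_mul]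
    exact tr2_add hF _ _
  -- value at left indices
  have hvleft : ∀ i : Fin (2 ^ (r - 1)),
      v (Fin.cast hN.symm (Fin.castAdd (2 ^ (r - 1)) i)) = (b + γ i)⁻¹ := by
    intro i
    show (Fin.append _ _ (Fin.cast hN (Fin.cast hN.symm (Fin.castAdd _ i))))⁻¹ = _
    rw [show Fin.cast hN (Fin.cast hN.symm (Fin.castAdd (2 ^ (r - 1)) i))
        = Fin.castAdd (2 ^ (r - 1)) i from rfl, Fin.append_left]
  -- kernel trivial
  have hzero : ∀ a : F, cw r v a = 0 → a = 0 := by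
    intro a h
    apply key_inj hr hF hb hγinj hγran
    intro i
    have h1 := congrFun h (Fin.cast hN.symm (Fin.castAdd (2 ^ (r - 1)) i))
    rw [show cw r v a (Fin.cast hN.symm (Fin.castAdd (2 ^ (r - 1)) i))
        = tr2 r (a * v (Fin.cast hN.symm (Fin.castAdd (2 ^ (r - 1)) i))) from rfl,
      hvleft i] at h1
    exact tr2_eq_zero_iff.mp h1
  have hinj : Function.Injective (cw r v) := by
    intro a a' h
    have h0 : cw r v (a + a') = 0 := by
      rw [hadd, h]
      funext l
      exact CharTwo.add_self_eq_zero _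
    have h1 := hzero _ h0
    have : a = -a' := eq_neg_of_add_eq_zero_left h1
    rwa [CharTwo.neg_eq] at this
  -- range ⊆ dual
  letI : Algebra (ZMod 2) F := ZMod.algebra F 2
  have hsubset : Set.range (cw r v) ⊆ dualSet v := by
    rintro w ⟨a, rfl⟩ u hu
    have hu' : ∑ l, (u l).val • v l = 0 := hu
    apply (ZMod.castHom (dvd_refl 2) F).injective
    rw [map_sum, map_zero]
    have hterm : ∀ l, (ZMod.castHom (dvd_refl 2) F) (cw r v a l * u l)
        = trF r (a * ((u l).val • v l)) := by
      intro l
      rw [map_mul]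
      rw [show cw r v a l = tr2 r (a * v l) from rfl, cast_tr2 hF]
      rw [ZMod.castHom_apply, ← ZMod.natCast_val, mul_comm, ← nsmul_eq_mul, mul_smul_comm]
      exact ((trFHom r).map_nsmul _ _).symm
    calc ∑ l, (ZMod.castHom (dvd_refl 2) F) (cw r v a l * u l)
        = ∑ l, trF r (a * ((u l).val • v l)) := Finset.sum_congr rfl fun l _ => hterm l
      _ = trF r (∑ l, a * ((u l).val • v l)) := (map_sum (trFHom r) _ _).symm
      _ = trF r (a * ∑ l, ((u l).val • v l)) := by rw [Finset.mul_sum]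
      _ = 0 := by rw [hu', mul_zero]; exact map_zero (trFHom r)
  -- counting: dual is the orthogonal of the kernel of Φ
  have hsmul : ∀ (z : ZMod 2) (x : F), z • x = (z.val : ℕ) • x := by
    intro z x
    show ZMod.cast z * x = _
    rw [← ZMod.natCast_val, nsmul_eq_mul]
  let Φ : (Fin (2 ^ r) → ZMod 2) →ₗ[ZMod 2] F :=
    { toFun := fun u => ∑ l, u l • v l
      map_add' := by intro u u'; simp [add_smul, Finset.sum_add_distrib]
      map_smul' := by intro c u; simp [Finset.smul_sum, smul_smul] }
  have hcode : codeSet v = ↑(LinearMap.ker Φ) := by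
    ext u
    simp only [codeSet, Set.mem_setOf_eq, SetLike.mem_coe, LinearMap.mem_ker]
    have : ∀ l, (u l).val • v l = u l • v l := fun l => (hsmul (u l) (v l)).symm
    constructor
    · intro h
      show ∑ l, u l • v l = 0
      rw [← Finset.sum_congr rfl fun l _ => this l]; exact h
    · intro h
      have h' : ∑ l, u l • v l = 0 := h
      rw [Finset.sum_congr rfl fun l _ => this l]; exact h'
  let B : LinearMap.BilinForm (ZMod 2) (Fin (2 ^ r) → ZMod 2) :=
    LinearMap.mk₂ (ZMod 2) (fun w u => ∑ l, w l * u l)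
      (by intros; simp [add_mul, Finset.sum_add_distrib])
      (by intros; simp [Finset.mul_sum, mul_assoc, Finset.smul_sum])
      (by intros; simp [mul_add, Finset.sum_add_distrib])
      (by intros; simp [Finset.mul_sum, mul_left_comm, Finset.smul_sum])
  have hBsymm : ∀ x y, B x y = B y x := by
    intro x y
    show ∑ l, x l * y l = ∑ l, y l * x l
    exact Finset.sum_congr rfl fun l _ => mul_comm _ _
  have hBrefl : B.IsRefl := fun x y h => by rw [hBsymm]; exact h
  have hBnd : B.Nondegenerate := by
    refine (LinearMap.IsRefl.nondegenerate_iff_separatingLeft hBrefl).mpr ?_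
    intro w h
    funext l
    have h1 := h (Pi.single l 1)
    show w l = 0
    have h2 : (B w) (Pi.single l 1) = ∑ l', w l' * (Pi.single l 1 : Fin (2 ^ r) → ZMod 2) l' :=
      rfl
    rw [h2, Finset.sum_eq_single l (fun l' _ hne => by simp [Pi.single_apply, hne])
      (by simp)] at h1
    simpa using h1
  have hdual : dualSet v = ↑(B.orthogonal (LinearMap.ker Φ)) := by
    ext w
    simp only [dualSet, Set.mem_setOf_eq, SetLike.mem_coe]
    rw [LinearMap.BilinForm.mem_orthogonal_iff]
    constructor
    · intro h u hu
      show B u w = 0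
      rw [← hBsymm]
      exact h u (by rw [hcode]; exact hu)
    · intro h u hu
      have : B u w = 0 := h u (by rw [hcode] at hu; exact hu)
      rw [← hBsymm] at this
      exact this
  -- finrank computations
  have hfinF : Module.finrank (ZMod 2) F = r := by
    have h1 := Module.card_eq_pow_finrank (K := ZMod 2) (V := F)
    rw [ZMod.card, hF] at h1
    exact (Nat.pow_right_injective le_rfl h1.symm)
  have hfinV : Module.finrank (ZMod 2) (Fin (2 ^ r) → ZMod 2) = 2 ^ r := by
    rw [Module.finrank_pi]; simp
  have hrangele : Module.finrank (ZMod 2) ↥(LinearMap.range Φ) ≤ r := by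
    have h1 := Submodule.finrank_le (LinearMap.range Φ)
    rwa [hfinF] at h1
  have hkerrange := LinearMap.finrank_range_add_finrank_ker Φ
  have horth := LinearMap.BilinForm.finrank_orthogonal hBnd (LinearMap.ker Φ)
  have horthle : Module.finrank (ZMod 2) ↥(B.orthogonal (LinearMap.ker Φ)) ≤ r := by
    rw [horth, hfinV]
    rw [hfinV] at hkerrange
    omega
  have hcardorth : Nat.card ↥(B.orthogonal (LinearMap.ker Φ)) ≤ 2 ^ r := by
    haveI : Fintype ↥(B.orthogonal (LinearMap.ker Φ)) := Fintype.ofFinite _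
    rw [Nat.card_eq_fintype_card]
    rw [Module.card_eq_pow_finrank (K := ZMod 2) (V := ↥(B.orthogonal (LinearMap.ker Φ))), ZMod.card]
    exact Nat.pow_le_pow_right (by norm_num) horthle
  have hdcard : Nat.card ↥(dualSet v) ≤ 2 ^ r := by
    rw [hdual]; exact hcardorth
  have hrcard : Nat.card ↥(Set.range (cw r v)) = 2 ^ r := by
    rw [Nat.card_range_of_injective hinj, Nat.card_eq_fintype_card, hF]
  have heq : Set.range (cw r v) = dualSet v := by
    apply Set.eq_of_subset_of_ncard_le hsubset
    rw [← Nat.card_coe_set_eq, ← Nat.card_coe_set_eq, hrcard]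
    exact hdcard
  exact ⟨hinj, hadd, heq, by rw [← heq, hrcard]⟩
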